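/- Let n ≥ 3 be an integer, A ∈ ℝ, B > 0, and define the radial function g : (1,∞) → ℝ by g(r) = A·exp(−B ∫₁^r s(ξ) √(ξ^{n−2}/(ξ^{n−2}−1)) dξ). Then g satisfies the admissibility condition g(r)² rⁿ → 0 as r → ∞ and attains equality in the Schwarzschild Heisenberg inequality: (1/2) ∫₁^∞ g(r)² r^{n−1} √(r^{n−2}/(r^{n−2}−1)) dr = (∫₁^∞ s(r)² g(r)² r^{n−1} √(r^{n−2}/(r^{n−2}−1)) dr)^{1/2} · (∫₁^∞ g'(r)² r^{n−1} √((r^{n−2}−1)/r^{n−2}) dr)^{1/2}. In particular the constant 1/2 is sharp. -/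

import Mathlib

open MeasureTheory Filter

/-- The induced distance from the event horizon:
`s(r) = r^(−(n−1)) ∫₁^r √(ξ^(n−2)/(ξ^(n−2)−1)) ξ^(n−1) dξ`. -/
noncomputable def schS (n : ℕ) (r : ℝ) : ℝ :=
  (∫ ξ in (1 : ℝ)..r, Real.sqrt (ξ ^ (n - 2) / (ξ ^ (n - 2) - 1)) * ξ ^ (n - 1)) / r ^ (n - 1)

open Set Topology intervalIntegral

noncomputable def schW (n : ℕ) (r : ℝ) : ℝ := Real.sqrt (r ^ (n-2) / (r ^ (n-2) - 1))

lemma schW_nonneg (n : ℕ) (r : ℝ) : 0 ≤ schW n r := Real.sqrt_nonneg _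

lemma one_lt_pow_sub {n : ℕ} (hn : 3 ≤ n) {r : ℝ} (hr : 1 < r) : (1:ℝ) < r ^ (n-2) :=
  one_lt_pow₀ hr (by omega)

lemma one_le_schW {n : ℕ} (hn : 3 ≤ n) {r : ℝ} (hr : 1 < r) : 1 ≤ schW n r := by
  have hx := one_lt_pow_sub hn hr
  have h1 : (1:ℝ) ≤ r ^ (n-2) / (r ^ (n-2) - 1) :=
    (one_le_div (by linarith)).2 (by linarith)
  calc (1:ℝ) = Real.sqrt 1 := by simp
  _ ≤ _ := Real.sqrt_le_sqrt h1

lemma schW_pos {n : ℕ} (hn : 3 ≤ n) {r : ℝ} (hr : 1 < r) : 0 < schW n r :=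
  lt_of_lt_of_le one_pos (one_le_schW hn hr)

lemma schW_le_sqrt_two {n : ℕ} (hn : 3 ≤ n) {r : ℝ} (hr : 2 ≤ r) : schW n r ≤ Real.sqrt 2 := by
  have hx : (2:ℝ) ≤ r ^ (n-2) := by
    calc (2:ℝ) ≤ 2 ^ (n-2) := by
          apply le_self_pow₀ one_le_two (by omega)
    _ ≤ r ^ (n-2) := pow_le_pow_left₀ (by norm_num) hr _
  apply Real.sqrt_le_sqrt
  rw [div_le_iff₀ (by linarith)]
  linarith

lemma measurable_schW (n : ℕ) : Measurable (schW n) :=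
  Real.continuous_sqrt.measurable.comp
    ((measurable_id.pow_const _).div ((measurable_id.pow_const _).sub measurable_const))

lemma continuousOn_schW {n : ℕ} (hn : 3 ≤ n) : ContinuousOn (schW n) (Ioi 1) := by
  intro r hr
  have hx := one_lt_pow_sub hn hr
  apply ContinuousAt.continuousWithinAt
  apply Real.continuous_sqrt.continuousAt.comp
  exact ((continuousAt_id.pow _).div ((continuousAt_id.pow _).sub continuousAt_const)
    (by simp; intro h; nlinarith))

lemma integrableOn_rpow_half : IntegrableOn (fun r : ℝ => (r-1) ^ (-(1/2):ℝ)) (Ioc 1 2) := by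
  have h0 : IntervalIntegrable (fun x : ℝ => x ^ (-(1/2):ℝ)) volume 0 1 :=
    intervalIntegral.intervalIntegrable_rpow' (by norm_num)
  have h1 := h0.comp_sub_right 1
  norm_num at h1
  exact (intervalIntegrable_iff_integrableOn_Ioc_of_le one_le_two).1 h1

lemma integrableOn_schW_Ioc {n : ℕ} (hn : 3 ≤ n) : IntegrableOn (schW n) (Ioc 1 2) := by
  apply Integrable.mono' (integrableOn_rpow_half.const_mul (Real.sqrt (2^(n-2))))
  · exact (measurable_schW n).aestronglyMeasurable
  · rw [ae_restrict_iff' measurableSet_Ioc]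
    filter_upwards with r hr
    obtain ⟨hr1, hr2⟩ := hr
    have hx := one_lt_pow_sub hn hr1
    have h1 : r ^ (n-2) / (r ^ (n-2) - 1) ≤ 2^(n-2) * (r-1)⁻¹ := by
      rw [← div_eq_mul_inv]
      apply div_le_div₀ (by positivity) (pow_le_pow_left₀ (by linarith) hr2 _) (by linarith)
      have : r ≤ r ^ (n-2) := le_self_pow₀ hr1.le (by omega)
      linarith
    rw [Real.norm_eq_abs, abs_of_nonneg (schW_nonneg n r)]
    calc schW n r ≤ Real.sqrt (2^(n-2) * (r-1)⁻¹) := Real.sqrt_le_sqrt h1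
    _ = Real.sqrt (2^(n-2)) * (r-1) ^ (-(1/2):ℝ) := by
        rw [Real.sqrt_mul (by positivity), Real.sqrt_inv,
          Real.rpow_neg (by linarith), Real.sqrt_eq_rpow, Real.sqrt_eq_rpow]

lemma intervalIntegrable_mul_schW {n : ℕ} (hn : 3 ≤ n) {φ : ℝ → ℝ}
    (hφ : ContinuousOn φ (Ici 1)) {r : ℝ} (hr : 1 ≤ r) :
    IntervalIntegrable (fun t => φ t * schW n t) volume 1 r := by
  rw [intervalIntegrable_iff_integrableOn_Ioc_of_le hr]
  have hsub : Ioc (1:ℝ) r ⊆ Ioc 1 2 ∪ Ioc 2 (max 2 r) := by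
    intro x hx
    rcases le_or_gt x 2 with h | h
    · exact Or.inl ⟨hx.1, h⟩
    · exact Or.inr ⟨h, le_trans hx.2 (le_max_right _ _)⟩
  apply IntegrableOn.mono_set _ hsub
  apply IntegrableOn.union
  · obtain ⟨M, hM⟩ := (isCompact_Icc (a:=(1:ℝ)) (b:=2)).exists_bound_of_continuousOn
      (hφ.mono (Icc_subset_Ici_self))
    apply Integrable.mono' ((integrableOn_schW_Ioc hn).const_mul M)
    · exact ((hφ.mono (fun x hx => le_of_lt hx.1)).aestronglyMeasurable
        measurableSet_Ioc).mul ((measurable_schW n).aestronglyMeasurable)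
    · rw [ae_restrict_iff' measurableSet_Ioc]
      filter_upwards with t ht
      rw [Real.norm_eq_abs, abs_mul, abs_of_nonneg (schW_nonneg n t)]
      exact mul_le_mul_of_nonneg_right
        (by simpa [Real.norm_eq_abs] using hM t ⟨ht.1.le, ht.2⟩) (schW_nonneg n t)
  · have hc : ContinuousOn (fun t => φ t * schW n t) (Icc 2 (max 2 r)) := by
      apply ContinuousOn.mul
      · exact hφ.mono (fun x hx => le_trans one_le_two hx.1)
      · exact (continuousOn_schW hn).mono (fun x hx => lt_of_lt_of_le one_lt_two hx.1)
    exact (hc.integrableOn_Icc).mono_set Ioc_subset_Icc_self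

lemma intervalIntegrable_schW_pow {n : ℕ} (hn : 3 ≤ n) (k : ℕ) {r : ℝ} (hr : 1 ≤ r) :
    IntervalIntegrable (fun t => schW n t * t ^ k) volume 1 r := by
  have h : (fun t => schW n t * t ^ k) = fun t => (fun u : ℝ => u ^ k) t * schW n t := by
    funext t; ring
  rw [h]
  exact intervalIntegrable_mul_schW hn (continuous_pow k).continuousOn hr

/-- primitive continuity helper -/
lemma continuousOn_primitive_Ici {f : ℝ → ℝ}
    (h : ∀ r ≥ (1:ℝ), IntervalIntegrable f volume 1 r) :
    ContinuousOn (fun r => ∫ t in (1:ℝ)..r, f t) (Ici 1) := by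
  intro r hr
  have hr1 : (1:ℝ) ≤ r := hr
  have h1 : ContinuousOn (fun u => ∫ t in (1:ℝ)..u, f t) (Icc 1 (r+1)) := by
    have := intervalIntegral.continuousOn_primitive_interval
      (a := 1) (b := r+1) (f := f) (μ := volume) ?_
    · rwa [uIcc_of_le (by linarith)] at this
    · rw [uIcc_of_le (by linarith)]
      exact (intervalIntegrable_iff_integrableOn_Icc_of_le (by linarith)).1 (h (r+1) (by linarith))
  have h2 : ContinuousWithinAt (fun u => ∫ t in (1:ℝ)..u, f t) (Icc 1 (r+1)) r :=
    h1 r ⟨hr1, by linarith⟩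
  apply h2.mono_of_mem_nhdsWithin
  have h3 : Iio (r+1) ∈ 𝓝[Ici 1] r := nhdsWithin_le_nhds (Iio_mem_nhds (by linarith))
  have h4 : Ici (1:ℝ) ∈ 𝓝[Ici 1] r := self_mem_nhdsWithin
  filter_upwards [h3, h4] with x hx hx'
  exact ⟨hx', hx.le⟩

noncomputable def schPhi (n : ℕ) (r : ℝ) : ℝ := ∫ t in (1:ℝ)..r, schS n t * schW n t

lemma schS_eq (n : ℕ) (r : ℝ) :
    schS n r = (∫ t in (1:ℝ)..r, schW n t * t ^ (n-1)) / r ^ (n-1) := rfl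

lemma Fprim_nonneg (n : ℕ) {r : ℝ} (hr : 1 ≤ r) :
    0 ≤ ∫ t in (1:ℝ)..r, schW n t * t ^ (n-1) := by
  apply intervalIntegral.integral_nonneg hr
  intro u hu
  exact mul_nonneg (schW_nonneg n u) (pow_nonneg (by linarith [hu.1]) _)

lemma schS_nonneg (n : ℕ) {r : ℝ} (hr : 1 ≤ r) : 0 ≤ schS n r := by
  rw [schS_eq]
  exact div_nonneg (Fprim_nonneg n hr) (pow_nonneg (by linarith) _)

lemma continuousOn_schS {n : ℕ} (hn : 3 ≤ n) : ContinuousOn (schS n) (Ici 1) := by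
  have h1 : ContinuousOn (fun r => ∫ t in (1:ℝ)..r, schW n t * t ^ (n-1)) (Ici 1) :=
    continuousOn_primitive_Ici (fun r hr => intervalIntegrable_schW_pow hn _ hr)
  exact h1.div ((continuous_pow _).continuousOn)
    (fun x hx => pow_ne_zero _ (ne_of_gt (by have h1 : (1:ℝ) ≤ x := hx; linarith)))

lemma intervalIntegrable_schS_mul_schW {n : ℕ} (hn : 3 ≤ n) {r : ℝ} (hr : 1 ≤ r) :
    IntervalIntegrable (fun t => schS n t * schW n t) volume 1 r :=
  intervalIntegrable_mul_schW hn (continuousOn_schS hn) hr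

lemma continuousOn_schPhi {n : ℕ} (hn : 3 ≤ n) : ContinuousOn (schPhi n) (Ici 1) :=
  continuousOn_primitive_Ici (fun r hr => intervalIntegrable_schS_mul_schW hn hr)

lemma schPhi_nonneg {n : ℕ} (hn : 3 ≤ n) {r : ℝ} (hr : 1 ≤ r) : 0 ≤ schPhi n r := by
  apply intervalIntegral.integral_nonneg hr
  intro u hu
  exact mul_nonneg (schS_nonneg n hu.1) (schW_nonneg n u)

lemma hasDerivAt_Fprim {n : ℕ} (hn : 3 ≤ n) {r : ℝ} (hr : 1 < r) :
    HasDerivAt (fun u => ∫ t in (1:ℝ)..u, schW n t * t ^ (n-1))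
      (schW n r * r ^ (n-1)) r := by
  apply intervalIntegral.integral_hasDerivAt_right (intervalIntegrable_schW_pow hn _ hr.le)
  · exact ⟨Ioi 1, Ioi_mem_nhds hr,
      (((continuousOn_schW hn).mul (continuous_pow _).continuousOn).aestronglyMeasurable
        measurableSet_Ioi)⟩
  · exact (((continuousOn_schW hn).continuousAt (Ioi_mem_nhds hr)).mul
      ((continuous_pow _).continuousAt))

lemma hasDerivAt_schPhi {n : ℕ} (hn : 3 ≤ n) {r : ℝ} (hr : 1 < r) :
    HasDerivAt (schPhi n) (schS n r * schW n r) r := by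
  apply intervalIntegral.integral_hasDerivAt_right (intervalIntegrable_schS_mul_schW hn hr.le)
  · exact ⟨Ioi 1, Ioi_mem_nhds hr,
      ((((continuousOn_schS hn).mono Ioi_subset_Ici_self).mul
        (continuousOn_schW hn)).aestronglyMeasurable measurableSet_Ioi)⟩
  · exact (((continuousOn_schS hn).continuousAt (Ici_mem_nhds hr)).mul
      ((continuousOn_schW hn).continuousAt (Ioi_mem_nhds hr)))

lemma Fprim_eq {n : ℕ} {r : ℝ} (hr : 0 < r) :
    (∫ t in (1:ℝ)..r, schW n t * t ^ (n-1)) = schS n r * r ^ (n-1) := by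
  rw [schS_eq, div_mul_cancel₀]
  positivity

lemma schS_lb {n : ℕ} (hn : 3 ≤ n) {ξ : ℝ} (hξ : 4 ≤ ξ) : ξ / (2*n) ≤ schS n ξ := by
  have hξ1 : (1:ℝ) < ξ := by linarith
  have hi1 : IntervalIntegrable (fun t => schW n t * t ^ (n-1)) volume 1 2 :=
    intervalIntegrable_schW_pow hn _ one_le_two
  have hi2 : IntervalIntegrable (fun t => schW n t * t ^ (n-1)) volume 2 ξ := by
    apply (intervalIntegrable_schW_pow hn (n-1) hξ1.le).mono_set
    rw [uIcc_of_le (by linarith), uIcc_of_le hξ1.le]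
    exact Icc_subset_Icc (by norm_num) le_rfl
  have hi3 : IntervalIntegrable (fun t : ℝ => t ^ (n-1)) volume 2 ξ :=
    (continuous_pow _).intervalIntegrable _ _
  have hsplit : (∫ t in (1:ℝ)..ξ, schW n t * t ^ (n-1))
      = (∫ t in (1:ℝ)..2, schW n t * t ^ (n-1)) + ∫ t in (2:ℝ)..ξ, schW n t * t ^ (n-1) :=
    (intervalIntegral.integral_add_adjacent_intervals hi1 hi2).symm
  have h1 : (0:ℝ) ≤ ∫ t in (1:ℝ)..2, schW n t * t ^ (n-1) := Fprim_nonneg n one_le_two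
  have h2 : (∫ t in (2:ℝ)..ξ, (t:ℝ) ^ (n-1)) ≤ ∫ t in (2:ℝ)..ξ, schW n t * t ^ (n-1) := by
    apply intervalIntegral.integral_mono_on (by linarith) hi3 hi2
    intro t ht
    have h1t : (1:ℝ) < t := by linarith [ht.1]
    exact le_mul_of_one_le_left (pow_nonneg (by linarith) _) (one_le_schW hn h1t)
  have hcast : ((n:ℝ) - 1) + 1 = (n:ℝ) := by ring
  have h3 : (∫ t in (2:ℝ)..ξ, (t:ℝ) ^ (n-1)) = (ξ ^ n - 2 ^ n) / n := by
    rw [integral_pow]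
    have h4 : (n - 1) + 1 = n := by omega
    rw [h4]
    congr 1
    push_cast [Nat.cast_sub (by omega : 1 ≤ n)]
    ring
  have h5 : (2:ℝ) ^ n ≤ ξ ^ n / 2 := by
    have h6 : (2:ℝ) ^ (n+1) ≤ 2 ^ (n*2) := pow_le_pow_right₀ one_le_two (by omega)
    have h7 : ((2:ℝ)^2) ^ n ≤ ξ ^ n := pow_le_pow_left₀ (by norm_num) (by norm_num; linarith) n
    rw [← pow_mul, mul_comm 2 n] at h7
    rw [le_div_iff₀ (by norm_num)]
    calc (2:ℝ) ^ n * 2 = 2 ^ (n+1) := by ring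
    _ ≤ 2 ^ (n*2) := h6
    _ ≤ ξ ^ n := h7
  have hnpos : (0:ℝ) < n := by positivity
  have hF : ξ ^ n / (2 * n) ≤ ∫ t in (1:ℝ)..ξ, schW n t * t ^ (n-1) := by
    rw [hsplit]
    have : ξ ^ n / (2*n) ≤ (ξ ^ n - 2 ^ n)/n := by
      rw [div_le_div_iff₀ (by positivity) hnpos]
      nlinarith [pow_nonneg (by linarith : (0:ℝ) ≤ ξ) n]
    linarith [h3 ▸ h2]
  rw [schS_eq, le_div_iff₀ (by positivity)]
  calc ξ / (2*n) * ξ ^ (n-1) = ξ ^ (n-1) * ξ / (2*n) := by ring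
  _ = ξ ^ n / (2*n) := by rw [pow_sub_one_mul (by omega)]
  _ ≤ _ := hF

lemma schPhi_lb {n : ℕ} (hn : 3 ≤ n) {r : ℝ} (hr : 1 ≤ r) :
    (r^2 - 16) / (4*n) ≤ schPhi n r := by
  have hnpos : (0:ℝ) < n := by positivity
  rcases le_or_gt r 4 with h4 | h4
  · have : (r^2 - 16) / (4*n) ≤ 0 := by
      apply div_nonpos_of_nonpos_of_nonneg _ (by positivity)
      nlinarith
    linarith [schPhi_nonneg hn hr]
  · have hi1 : IntervalIntegrable (fun t => schS n t * schW n t) volume 1 4 :=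
      intervalIntegrable_schS_mul_schW hn (by norm_num)
    have hi2 : IntervalIntegrable (fun t => schS n t * schW n t) volume 4 r := by
      apply (intervalIntegrable_schS_mul_schW hn (by linarith : (1:ℝ) ≤ r)).mono_set
      rw [uIcc_of_le (by linarith), uIcc_of_le (by linarith)]
      exact Icc_subset_Icc (by norm_num) le_rfl
    have hi3 : IntervalIntegrable (fun t : ℝ => t / (2*n)) volume 4 r :=
      (continuous_id.div_const _).intervalIntegrable _ _
    have hsplit : schPhi n r = schPhi n 4 + ∫ t in (4:ℝ)..r, schS n t * schW n t :=
      (intervalIntegral.integral_add_adjacent_intervals hi1 hi2).symm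
    have h2 : (∫ t in (4:ℝ)..r, (t:ℝ) / (2*n)) ≤ ∫ t in (4:ℝ)..r, schS n t * schW n t := by
      apply intervalIntegral.integral_mono_on (by linarith) hi3 hi2
      intro t ht
      have h4t : (4:ℝ) ≤ t := ht.1
      calc t / (2*n) ≤ schS n t := schS_lb hn h4t
      _ ≤ schS n t * schW n t :=
          le_mul_of_one_le_right (schS_nonneg n (by linarith)) (one_le_schW hn (by linarith))
    have h3 : (∫ t in (4:ℝ)..r, (t:ℝ) / (2*n)) = (r^2 - 16) / (4*n) := by
      rw [intervalIntegral.integral_div, integral_id]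
      rw [div_div]
      norm_num
      ring_nf
    rw [hsplit]
    have := schPhi_nonneg hn (show (1:ℝ) ≤ 4 by norm_num)
    linarith [h3 ▸ h2]

/-- constant `C2 = ∫₁² schW t^{n-1}` -/
noncomputable def schC (n : ℕ) : ℝ := ∫ t in (1:ℝ)..2, schW n t * t ^ (n-1)

lemma schC_nonneg (n : ℕ) : 0 ≤ schC n := Fprim_nonneg n one_le_two

lemma Fprim_ub {n : ℕ} (hn : 3 ≤ n) {r : ℝ} (hr : 1 ≤ r) :
    (∫ t in (1:ℝ)..r, schW n t * t ^ (n-1)) ≤ schC n + Real.sqrt 2 * r ^ n := by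
  rcases le_or_gt r 2 with h2 | h2
  · -- F r ≤ F 2 = schC n
    have hi1 : IntervalIntegrable (fun t => schW n t * t ^ (n-1)) volume 1 r :=
      intervalIntegrable_schW_pow hn _ hr
    have hi2 : IntervalIntegrable (fun t => schW n t * t ^ (n-1)) volume r 2 := by
      apply (intervalIntegrable_schW_pow hn (n-1) one_le_two).mono_set
      rw [uIcc_of_le h2, uIcc_of_le one_le_two]
      exact Icc_subset_Icc hr le_rfl
    have hsplit : schC n = (∫ t in (1:ℝ)..r, schW n t * t ^ (n-1))
        + ∫ t in r..2, schW n t * t ^ (n-1) :=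
      (intervalIntegral.integral_add_adjacent_intervals hi1 hi2).symm
    have h3 : (0:ℝ) ≤ ∫ t in r..2, schW n t * t ^ (n-1) := by
      apply intervalIntegral.integral_nonneg h2
      intro u hu
      exact mul_nonneg (schW_nonneg n u) (pow_nonneg (by linarith [hu.1]) _)
    have h4 : (0:ℝ) ≤ Real.sqrt 2 * r ^ n := by positivity
    linarith
  · have hi1 : IntervalIntegrable (fun t => schW n t * t ^ (n-1)) volume 1 2 :=
      intervalIntegrable_schW_pow hn _ one_le_two
    have hi2 : IntervalIntegrable (fun t => schW n t * t ^ (n-1)) volume 2 r := by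
      apply (intervalIntegrable_schW_pow hn (n-1) (by linarith)).mono_set
      rw [uIcc_of_le h2.le, uIcc_of_le (by linarith)]
      exact Icc_subset_Icc one_le_two le_rfl
    have hi3 : IntervalIntegrable (fun t : ℝ => Real.sqrt 2 * t ^ (n-1)) volume 2 r :=
      (continuous_const.mul (continuous_pow _)).intervalIntegrable _ _
    have hsplit : (∫ t in (1:ℝ)..r, schW n t * t ^ (n-1))
        = schC n + ∫ t in (2:ℝ)..r, schW n t * t ^ (n-1) :=
      (intervalIntegral.integral_add_adjacent_intervals hi1 hi2).symm
    have h2' : (∫ t in (2:ℝ)..r, schW n t * t ^ (n-1))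
        ≤ ∫ t in (2:ℝ)..r, Real.sqrt 2 * t ^ (n-1) := by
      apply intervalIntegral.integral_mono_on (by linarith) hi2 hi3
      intro t ht
      exact mul_le_mul_of_nonneg_right (schW_le_sqrt_two hn ht.1)
        (pow_nonneg (by linarith [ht.1]) _)
    have h3 : (∫ t in (2:ℝ)..r, Real.sqrt 2 * t ^ (n-1)) ≤ Real.sqrt 2 * r ^ n := by
      rw [intervalIntegral.integral_const_mul]
      apply mul_le_mul_of_nonneg_left _ (Real.sqrt_nonneg 2)
      rw [integral_pow]
      have h4 : (n - 1) + 1 = n := by omega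
      rw [h4]
      have hc : (0:ℝ) < ((n:ℝ) - 1) + 1 := by
        have : (3:ℝ) ≤ (n:ℝ) := by exact_mod_cast hn
        linarith
      have hc2 : ((n - 1 : ℕ):ℝ) + 1 = (n:ℝ) := by
        push_cast [Nat.cast_sub (by omega : 1 ≤ n)]; ring
      rw [hc2]
      have hn1 : (1:ℝ) ≤ (n:ℝ) := by exact_mod_cast (by omega : 1 ≤ n)
      have hrn : (0:ℝ) ≤ r ^ n := by positivity
      have h2n : (0:ℝ) ≤ (2:ℝ) ^ n := by positivity
      rw [div_le_iff₀ (by linarith)]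
      nlinarith
    linarith
  
lemma schS_ub {n : ℕ} (hn : 3 ≤ n) {r : ℝ} (hr : 1 ≤ r) :
    schS n r ≤ (schC n + Real.sqrt 2) * r ^ n := by
  have h1 : schS n r ≤ ∫ t in (1:ℝ)..r, schW n t * t ^ (n-1) := by
    rw [schS_eq]
    exact div_le_self (Fprim_nonneg n hr) (one_le_pow₀ hr)
  have h2 : (1:ℝ) ≤ r ^ n := one_le_pow₀ hr
  calc schS n r ≤ schC n + Real.sqrt 2 * r ^ n := le_trans h1 (Fprim_ub hn hr)
  _ ≤ (schC n + Real.sqrt 2) * r ^ n := by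
      have := schC_nonneg n
      nlinarith [Real.sqrt_nonneg 2]

lemma exp_phi_bound {n : ℕ} (hn : 3 ≤ n) {B : ℝ} (hB : 0 < B) {t : ℝ} (ht : 1 ≤ t) :
    Real.exp (-(2*B) * schPhi n t)
      ≤ Real.exp (8*B/n) * Real.exp (-(B/(2*n)) * t^2) := by
  rw [← Real.exp_add]
  apply Real.exp_le_exp.2
  have h1 := schPhi_lb hn ht
  have hnpos : (0:ℝ) < n := by positivity
  have h2 : -(2*B) * schPhi n t ≤ -(2*B) * ((t^2-16)/(4*n)) := by
    apply mul_le_mul_of_nonpos_left h1 (by linarith)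
  calc -(2*B) * schPhi n t ≤ -(2*B) * ((t^2-16)/(4*n)) := h2
  _ = 8*B/n + -(B/(2*n)) * t^2 := by field_simp; ring
  _ ≤ _ := le_rfl

lemma aesm_helper {n : ℕ} (hn : 3 ≤ n) (B : ℝ) (k : ℕ) {s : Set ℝ}
    (hs : MeasurableSet s) (hsub : s ⊆ Ici 1) :
    AEStronglyMeasurable (fun t : ℝ => t ^ k * Real.exp (-(2*B) * schPhi n t) * schW n t)
      (volume.restrict s) := by
  apply AEStronglyMeasurable.mul _ ((measurable_schW n).aestronglyMeasurable)
  apply AEStronglyMeasurable.mul ((continuous_pow k).aestronglyMeasurable)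
  apply ContinuousOn.aestronglyMeasurable _ hs
  apply (Real.continuous_exp.comp_continuousOn _).mono hsub
  exact (continuousOn_schPhi hn).const_smul (-(2*B))

lemma master_integrable {n : ℕ} (hn : 3 ≤ n) {B : ℝ} (hB : 0 < B) (k : ℕ) :
    IntegrableOn (fun t : ℝ => t ^ k * Real.exp (-(2*B) * schPhi n t) * schW n t) (Ioi 1) := by
  have hsub : Ioi (1:ℝ) ⊆ Ioc 1 2 ∪ Ioi 2 := by
    intro x hx
    rcases le_or_gt x 2 with h | h
    · exact Or.inl ⟨hx, h⟩
    · exact Or.inr h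
  apply IntegrableOn.mono_set _ hsub
  apply IntegrableOn.union
  · -- on Ioc 1 2
    apply Integrable.mono' ((integrableOn_schW_Ioc hn).const_mul (2^k))
    · exact aesm_helper hn B k measurableSet_Ioc (fun x hx => hx.1.le)
    · rw [ae_restrict_iff' measurableSet_Ioc]
      filter_upwards with t ht
      have h1 : (1:ℝ) ≤ t := ht.1.le
      have hexp : Real.exp (-(2*B) * schPhi n t) ≤ 1 := by
        apply Real.exp_le_one_iff.2
        have := schPhi_nonneg hn h1
        nlinarith
      rw [Real.norm_eq_abs, abs_of_nonneg (mul_nonneg (mul_nonneg (by positivity)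
        (Real.exp_pos _).le) (schW_nonneg n t))]
      have htk : t ^ k ≤ 2 ^ k := pow_le_pow_left₀ (by linarith) ht.2 _
      have h0 : (0:ℝ) ≤ t ^ k := by positivity
      have hmain : t ^ k * Real.exp (-(2*B) * schPhi n t) ≤ 2 ^ k := by
        nlinarith [Real.exp_pos (-(2*B) * schPhi n t)]
      exact mul_le_mul_of_nonneg_right hmain (schW_nonneg n t)
  · -- on Ioi 2
    have hb : (0:ℝ) < B/(2*n) := by positivity
    have hint : IntegrableOn
        (fun t : ℝ => (Real.sqrt 2 * Real.exp (8*B/n)) *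
          (t ^ ((k:ℝ)) * Real.exp (-(B/(2*n)) * t^2))) (Ioi 2) := by
      apply Integrable.const_mul
      exact ((integrableOn_rpow_mul_exp_neg_mul_sq hb
        (by have : (0:ℝ) ≤ (k:ℝ) := Nat.cast_nonneg k; linarith : (-1:ℝ) < (k:ℝ))).mono_set (by
          intro x hx; exact lt_trans (by norm_num : (0:ℝ) < 2) hx)).mono_set le_rfl
    apply Integrable.mono' hint
    · exact aesm_helper hn B k measurableSet_Ioi (fun x hx => le_trans one_le_two hx.out.le)
    · rw [ae_restrict_iff' measurableSet_Ioi]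
      filter_upwards with t ht
      have h2t : (2:ℝ) < t := ht
      have h1 : (1:ℝ) ≤ t := by linarith
      rw [Real.norm_eq_abs, abs_of_nonneg (mul_nonneg (mul_nonneg (by positivity)
        (Real.exp_pos _).le) (schW_nonneg n t))]
      have hrw : t ^ ((k:ℝ)) = t ^ k := Real.rpow_natCast t k
      rw [hrw]
      have hW : schW n t ≤ Real.sqrt 2 := schW_le_sqrt_two hn h2t.le
      have hexp := exp_phi_bound hn hB h1
      have h0k : (0:ℝ) ≤ t ^ k := by positivity
      have h0e : (0:ℝ) < Real.exp (-(2*B) * schPhi n t) := Real.exp_pos _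
      have h0e2 : (0:ℝ) < Real.exp (-(B/(2*n)) * t^2) := Real.exp_pos _
      have h0e3 : (0:ℝ) < Real.exp (8*B/n) := Real.exp_pos _
      have hWn := schW_nonneg n t
      calc t ^ k * Real.exp (-(2*B) * schPhi n t) * schW n t
          ≤ t ^ k * (Real.exp (8*B/n) * Real.exp (-(B/(2*n)) * t^2)) * Real.sqrt 2 := by
            apply mul_le_mul _ hW hWn (by positivity)
            exact mul_le_mul_of_nonneg_left hexp h0k
      _ = Real.sqrt 2 * Real.exp (8*B/n) * (t ^ k * Real.exp (-(B/(2*n)) * t^2)) := by ring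

lemma tendsto_pow_mul_exp_neg_sq {b : ℝ} (hb : 0 < b) (k : ℕ) :
    Tendsto (fun r : ℝ => r ^ k * Real.exp (-b * r^2)) atTop (nhds 0) := by
  apply tendsto_of_tendsto_of_tendsto_of_le_of_le'
    (tendsto_const_nhds) (Real.tendsto_pow_mul_exp_neg_atTop_nhds_zero k)
  · filter_upwards [eventually_ge_atTop (0:ℝ)] with r hr
    positivity
  · filter_upwards [eventually_ge_atTop (max 1 (1/b))] with r hr
    have h1 : (1:ℝ) ≤ r := le_trans (le_max_left _ _) hr
    have h2 : 1/b ≤ r := le_trans (le_max_right _ _) hr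
    have h3 : r ≤ b * r^2 := by
      rw [div_le_iff₀ hb] at h2
      nlinarith
    have h4 : Real.exp (-b * r^2) ≤ Real.exp (-r) := by
      apply Real.exp_le_exp.2; linarith
    exact mul_le_mul_of_nonneg_left h4 (by positivity)

/-- the radial function
`g(r) = A exp(−B ∫₁^r s(ξ) √(ξ^(n−2)/(ξ^(n−2)−1)) dξ)` (with `A ∈ ℝ`, `B > 0`) is
admissible (`g(r)² rⁿ → 0` as `r → ∞`) and attains equality in the Schwarzschild Heisenberg
inequality, so the constant `1/2` is sharp. -/
theorem schwarzschild_heisenberg_minimiser (n : ℕ) (hn : 3 ≤ n) (A B : ℝ) (hB : 0 < B)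
    (g : ℝ → ℝ)
    (hg : ∀ r : ℝ, g r
      = A * Real.exp (-B * ∫ ξ in (1 : ℝ)..r,
          schS n ξ * Real.sqrt (ξ ^ (n - 2) / (ξ ^ (n - 2) - 1)))) :
    Filter.Tendsto (fun r : ℝ => g r ^ 2 * r ^ n) Filter.atTop (nhds 0) ∧
    (1 / 2 : ℝ) *
        (∫ r in Set.Ioi (1 : ℝ),
          g r ^ 2 * r ^ (n - 1) * Real.sqrt (r ^ (n - 2) / (r ^ (n - 2) - 1)))
      = Real.sqrt (∫ r in Set.Ioi (1 : ℝ),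
            schS n r ^ 2 * g r ^ 2 * r ^ (n - 1)
              * Real.sqrt (r ^ (n - 2) / (r ^ (n - 2) - 1))) *
        Real.sqrt (∫ r in Set.Ioi (1 : ℝ),
            deriv g r ^ 2 * r ^ (n - 1)
              * Real.sqrt ((r ^ (n - 2) - 1) / r ^ (n - 2))) := by
  have hg' : ∀ r : ℝ, g r = A * Real.exp (-B * schPhi n r) := hg
  have hfun : g = fun u => A * Real.exp (-B * schPhi n u) := funext hg'
  have hb : (0:ℝ) < B / (2*n) := by positivity
  -- squared form
  have hgsq : ∀ t : ℝ, g t ^ 2 = A^2 * Real.exp (-(2*B) * schPhi n t) := by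
    intro t
    calc g t ^ 2 = (A * Real.exp (-B * schPhi n t))^2 := by rw [hg' t]
    _ = A^2 * (Real.exp (-B*schPhi n t) * Real.exp (-B*schPhi n t)) := by ring
    _ = A^2 * Real.exp (-B*schPhi n t + -B*schPhi n t) := by rw [← Real.exp_add]
    _ = A^2 * Real.exp (-(2*B) * schPhi n t) := by ring_nf
  have hgcont : ContinuousOn g (Ici 1) := by
    rw [hfun]
    exact continuousOn_const.mul
      (Real.continuous_exp.comp_continuousOn ((continuousOn_schPhi hn).const_smul (-B)))
  have hgderiv : ∀ r : ℝ, 1 < r → HasDerivAt g (-B * (schS n r * schW n r) * g r) r := by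
    intro r hr
    rw [hfun]
    have h := (((hasDerivAt_schPhi hn hr).const_mul (-B)).exp).const_mul A
    refine h.congr_deriv ?_
    ring
  -- the three statement integrands
  set I₀ : ℝ → ℝ := fun r => g r ^ 2 * r ^ (n - 1) * schW n r with hI₀
  set I₁ : ℝ → ℝ := fun r => schS n r ^ 2 * g r ^ 2 * r ^ (n - 1) * schW n r with hI₁
  -- integrability
  have h1 : IntegrableOn I₀ (Ioi 1) := by
    have heq : I₀ = fun r => A^2 * (r ^ (n-1) * Real.exp (-(2*B) * schPhi n r) * schW n r) := by
      funext r; rw [hI₀]; dsimp only; rw [hgsq r]; ring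
    rw [heq]
    exact (master_integrable hn hB (n-1)).const_mul _
  have h2 : IntegrableOn I₁ (Ioi 1) := by
    apply Integrable.mono'
      ((master_integrable hn hB (2*n + (n-1))).const_mul ((schC n + Real.sqrt 2)^2 * A^2))
    · apply AEStronglyMeasurable.mul _ ((measurable_schW n).aestronglyMeasurable)
      apply ContinuousOn.aestronglyMeasurable _ measurableSet_Ioi
      apply ContinuousOn.mul _ ((continuous_pow _).continuousOn)
      exact (((continuousOn_schS hn).mono Ioi_subset_Ici_self).pow 2).mul
        ((hgcont.mono Ioi_subset_Ici_self).pow 2)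
    · rw [ae_restrict_iff' measurableSet_Ioi]
      filter_upwards with t ht
      have h1t : (1:ℝ) ≤ t := le_of_lt ht
      have hSnn := schS_nonneg n h1t
      have hWnn := schW_nonneg n t
      have hSub := schS_ub hn h1t
      rw [hI₁, Real.norm_eq_abs]
      dsimp only
      rw [abs_of_nonneg (mul_nonneg (mul_nonneg (mul_nonneg (sq_nonneg _) (sq_nonneg _))
        (pow_nonneg (by linarith) _)) hWnn)]
      rw [hgsq t]
      have hS2 : schS n t ^ 2 ≤ (schC n + Real.sqrt 2)^2 * t ^ (2*n) := by
        have := schC_nonneg n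
        calc schS n t ^ 2 ≤ ((schC n + Real.sqrt 2) * t ^ n)^2 := by
              apply pow_le_pow_left₀ hSnn hSub
        _ = (schC n + Real.sqrt 2)^2 * t ^ (2*n) := by rw [mul_pow, ← pow_mul]; ring_nf
      have hexp := (Real.exp_pos (-(2*B) * schPhi n t)).le
      have htp : (0:ℝ) ≤ t ^ (n-1) := pow_nonneg (by linarith) _
      calc schS n t ^ 2 * (A^2 * Real.exp (-(2*B) * schPhi n t)) * t ^ (n-1) * schW n t
          ≤ ((schC n + Real.sqrt 2)^2 * t ^ (2*n)) * (A^2 * Real.exp (-(2*B) * schPhi n t))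
              * t ^ (n-1) * schW n t := by
            apply mul_le_mul_of_nonneg_right _ hWnn
            apply mul_le_mul_of_nonneg_right _ htp
            apply mul_le_mul_of_nonneg_right hS2 (by positivity)
      _ = (schC n + Real.sqrt 2)^2 * A^2
            * (t ^ (2*n + (n-1)) * Real.exp (-(2*B) * schPhi n t) * schW n t) := by
          rw [pow_add]; ring
  -- value of the derivative integral
  have hI2 : (∫ r in Ioi (1:ℝ),
        deriv g r ^ 2 * r ^ (n - 1) * Real.sqrt ((r ^ (n - 2) - 1) / r ^ (n - 2)))
      = B^2 * ∫ r in Ioi (1:ℝ), I₁ r := by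
    rw [← MeasureTheory.integral_const_mul]
    apply setIntegral_congr_fun measurableSet_Ioi
    intro r hr
    have hr1 : (1:ℝ) < r := hr
    dsimp only
    have hd : deriv g r = -B * (schS n r * schW n r) * g r := (hgderiv r hr1).deriv
    have hsq : Real.sqrt ((r^(n-2)-1)/r^(n-2)) = (schW n r)⁻¹ := by
      rw [show ((r^(n-2)-1)/r^(n-2) : ℝ) = (r^(n-2)/(r^(n-2)-1))⁻¹ by rw [inv_div],
        Real.sqrt_inv]
      rfl
    have hW := schW_pos hn hr1
    rw [hd, hsq, hI₁]
    dsimp only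
    field_simp
  -- integration by parts / FTC
  set Fp : ℝ → ℝ := fun u => ∫ t in (1:ℝ)..u, schW n t * t ^ (n-1) with hFp
  have hFpcont : ContinuousOn Fp (Ici 1) :=
    continuousOn_primitive_Ici (fun r hr => intervalIntegrable_schW_pow hn _ hr)
  set f : ℝ → ℝ := fun u => g u ^ 2 * Fp u with hf
  have hf1 : f 1 = 0 := by
    rw [hf]; dsimp only; rw [hFp]; dsimp only
    rw [intervalIntegral.integral_same]; ring
  have hcontf : ContinuousWithinAt f (Ici 1) 1 :=
    ((hgcont.pow 2).mul hFpcont) 1 self_mem_Ici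
  have hderivf : ∀ x ∈ Ioi (1:ℝ), HasDerivAt f (I₀ x - 2*B * I₁ x) x := by
    intro x hx
    have hx1 : (1:ℝ) < x := hx
    have hgx := hgderiv x hx1
    have hFx := hasDerivAt_Fprim hn hx1
    have h := (hgx.pow 2).mul hFx
    refine h.congr_deriv ?_
    simp only [Pi.pow_apply]
    rw [show (∫ t in (1:ℝ)..x, schW n t * t ^ (n-1)) = schS n x * x ^ (n-1) from
      Fprim_eq (by linarith)]
    rw [hI₀, hI₁]
    dsimp only
    ring
  have hftends : Tendsto f atTop (nhds 0) := by
    have hub : Tendsto (fun r : ℝ => (A^2 * Real.exp (8*B/n) * (schC n + Real.sqrt 2))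
        * (r ^ n * Real.exp (-(B/(2*n)) * r^2))) atTop (nhds 0) := by
      have := (tendsto_pow_mul_exp_neg_sq hb n).const_mul
        (A^2 * Real.exp (8*B/n) * (schC n + Real.sqrt 2))
      simpa using this
    apply tendsto_of_tendsto_of_tendsto_of_le_of_le' tendsto_const_nhds hub
    · filter_upwards [eventually_ge_atTop (1:ℝ)] with r hr
      rw [hf]; dsimp only
      exact mul_nonneg (sq_nonneg _) (Fprim_nonneg n hr)
    · filter_upwards [eventually_ge_atTop (1:ℝ)] with r hr
      rw [hf]; dsimp only
      rw [hgsq r]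
      have hFub : Fp r ≤ (schC n + Real.sqrt 2) * r ^ n := by
        have h2 : (1:ℝ) ≤ r ^ n := one_le_pow₀ hr
        have := schC_nonneg n
        calc Fp r ≤ schC n + Real.sqrt 2 * r ^ n := Fprim_ub hn hr
        _ ≤ (schC n + Real.sqrt 2) * r ^ n := by nlinarith [Real.sqrt_nonneg 2]
      have hFnn : (0:ℝ) ≤ Fp r := Fprim_nonneg n hr
      have hexp := exp_phi_bound hn hB hr
      have hA2 : (0:ℝ) ≤ A^2 := sq_nonneg A
      have he1 : (0:ℝ) < Real.exp (-(2*B) * schPhi n r) := Real.exp_pos _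
      calc A^2 * Real.exp (-(2*B) * schPhi n r) * Fp r
          ≤ A^2 * (Real.exp (8*B/n) * Real.exp (-(B/(2*n)) * r^2))
            * ((schC n + Real.sqrt 2) * r ^ n) := by
            apply mul_le_mul
            · exact mul_le_mul_of_nonneg_left hexp hA2
            · exact hFub
            · exact hFnn
            · positivity
      _ = (A^2 * Real.exp (8*B/n) * (schC n + Real.sqrt 2))
            * (r ^ n * Real.exp (-(B/(2*n)) * r^2)) := by ring
  have hIBP : (∫ x in Ioi (1:ℝ), (I₀ x - 2*B * I₁ x)) = 0 - f 1 :=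
    integral_Ioi_of_hasDerivAt_of_tendsto hcontf hderivf
      (h1.sub (h2.const_mul (2*B))) hftends
  have hmain : (∫ x in Ioi (1:ℝ), I₀ x) = 2*B * ∫ x in Ioi (1:ℝ), I₁ x := by
    rw [hf1, sub_zero] at hIBP
    rw [integral_sub h1 (h2.const_mul (2*B)), MeasureTheory.integral_const_mul] at hIBP
    linarith
  -- part 1
  have part1 : Tendsto (fun r : ℝ => g r ^ 2 * r ^ n) atTop (nhds 0) := by
    have hub : Tendsto (fun r : ℝ => (A^2 * Real.exp (8*B/n))
        * (r ^ n * Real.exp (-(B/(2*n)) * r^2))) atTop (nhds 0) := by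
      have := (tendsto_pow_mul_exp_neg_sq hb n).const_mul (A^2 * Real.exp (8*B/n))
      simpa using this
    apply tendsto_of_tendsto_of_tendsto_of_le_of_le' tendsto_const_nhds hub
    · filter_upwards [eventually_ge_atTop (0:ℝ)] with r hr
      positivity
    · filter_upwards [eventually_ge_atTop (1:ℝ)] with r hr
      rw [hgsq r]
      have hexp := exp_phi_bound hn hB hr
      have hrn : (0:ℝ) ≤ r ^ n := by positivity
      calc A^2 * Real.exp (-(2*B) * schPhi n r) * r ^ n
          ≤ A^2 * (Real.exp (8*B/n) * Real.exp (-(B/(2*n)) * r^2)) * r ^ n := by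
            apply mul_le_mul_of_nonneg_right
              (mul_le_mul_of_nonneg_left hexp (sq_nonneg A)) hrn
      _ = (A^2 * Real.exp (8*B/n)) * (r ^ n * Real.exp (-(B/(2*n)) * r^2)) := by ring
  refine ⟨part1, ?_⟩
  -- rewrite sqrt weights as schW
  have hW_eq : ∀ r : ℝ, Real.sqrt (r ^ (n-2) / (r ^ (n-2) - 1)) = schW n r := fun r => rfl
  simp only [hW_eq]
  have hI_nonneg : (0:ℝ) ≤ ∫ x in Ioi (1:ℝ), I₁ x := by
    apply setIntegral_nonneg measurableSet_Ioi
    intro x hx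
    have hx1 : (1:ℝ) ≤ x := le_of_lt hx
    rw [hI₁]; dsimp only
    exact mul_nonneg (mul_nonneg (mul_nonneg (sq_nonneg _) (sq_nonneg _))
      (pow_nonneg (by linarith) _)) (schW_nonneg n x)
  rw [show (∫ r in Ioi (1:ℝ), g r ^ 2 * r ^ (n-1) * schW n r) = ∫ x in Ioi (1:ℝ), I₀ x from rfl]
  rw [hmain, hI2]
  rw [show (∫ r in Ioi (1:ℝ), schS n r ^ 2 * g r ^ 2 * r ^ (n-1) * schW n r)
    = ∫ x in Ioi (1:ℝ), I₁ x from rfl]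
  rw [Real.sqrt_mul (sq_nonneg B), Real.sqrt_sq hB.le]
  rw [show Real.sqrt (∫ x in Ioi (1:ℝ), I₁ x) * (B * Real.sqrt (∫ x in Ioi (1:ℝ), I₁ x))
    = B * (Real.sqrt (∫ x in Ioi (1:ℝ), I₁ x) * Real.sqrt (∫ x in Ioi (1:ℝ), I₁ x)) by ring]
  rw [Real.mul_self_sqrt hI_nonneg]
  ring
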